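/- Elliptical potential lemma: Let λ ≥ 1 and x₁,…,x_T ∈ ℝ^d with ‖x_t‖₂ ≤ 1 for all t. Define V_t = λI + ∑_{s=1}^t x_s x_sᵀ. Then ∑_{t=1}^T ‖x_t‖²_{V_{t-1}⁻¹} ≤ 2 log(det(V_T)/det(λI)). -/

import Mathlib

open Matrix Finset

private lemma vmv_psd {d : ℕ} (v : Fin d → ℝ) : (vecMulVec v v).PosSemidef := by
  have h := Matrix.posSemidef_conjTranspose_mul_self (Matrix.replicateRow Unit v)
  rwa [Matrix.conjTranspose_replicateRow, star_trivial, ← Matrix.vecMulVec_eq] at h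

private lemma log_ineq {u : ℝ} (h0 : 0 ≤ u) (h1 : u ≤ 1) : u ≤ 2 * Real.log (1 + u) := by
  have hpos : (0:ℝ) < 1 + u := by linarith
  have h2 : Real.log (1 + u)⁻¹ ≤ (1 + u)⁻¹ - 1 :=
    Real.log_le_sub_one_of_pos (by positivity)
  rw [Real.log_inv] at h2
  have hv : (1 + u)⁻¹ * (1 + u) = 1 := inv_mul_cancel₀ hpos.ne'
  nlinarith [h2, hv, sq_nonneg u]

theorem elliptical_potential_lemma {d : ℕ} (T : ℕ) (lam : ℝ) (hlam : 1 ≤ lam)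
    (x : ℕ → Fin d → ℝ)
    (hx : ∀ t, ∑ i, (x t i) ^ 2 ≤ 1)
    (V : ℕ → Matrix (Fin d) (Fin d) ℝ)
    (hV : ∀ t, V t = lam • (1 : Matrix (Fin d) (Fin d) ℝ)
        + ∑ s ∈ Finset.range t, vecMulVec (x s) (x s)) :
    ∑ t ∈ Finset.range T, x t ⬝ᵥ (V t)⁻¹ *ᵥ x t
      ≤ 2 * Real.log ((V T).det / (lam • (1 : Matrix (Fin d) (Fin d) ℝ)).det) := by
  have hlam0 : (0:ℝ) < lam := by linarith
  -- positive definiteness of λ•1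
  have hbase : (lam • (1 : Matrix (Fin d) (Fin d) ℝ)).PosDef := by
    rw [Matrix.smul_one_eq_diagonal]
    exact Matrix.posDef_diagonal_iff.2 fun i => hlam0
  -- sum of PSD parts
  have hpsd : ∀ t, (∑ s ∈ Finset.range t, vecMulVec (x s) (x s)).PosSemidef := by
    intro t
    exact Finset.sum_induction _ _ (fun a b ha hb => ha.add hb) Matrix.PosSemidef.zero
      (fun s _ => vmv_psd (x s))
  have hpos : ∀ t, (V t).PosDef := by
    intro t; rw [hV t]; exact hbase.add_posSemidef (hpsd t)
  -- quadratic lower bound  λ‖z‖² ≤ zᵀ V z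
  have hq : ∀ t (z : Fin d → ℝ), lam * (z ⬝ᵥ z) ≤ z ⬝ᵥ (V t) *ᵥ z := by
    intro t z
    rw [hV t, Matrix.add_mulVec, dotProduct_add]
    have h1 : z ⬝ᵥ (lam • (1 : Matrix (Fin d) (Fin d) ℝ)) *ᵥ z = lam * (z ⬝ᵥ z) := by
      simp [Matrix.smul_mulVec, dotProduct_smul]
    have h2 : 0 ≤ z ⬝ᵥ (∑ s ∈ Finset.range t, vecMulVec (x s) (x s)) *ᵥ z := by
      have := (hpsd t).dotProduct_mulVec_nonneg z
      simpa using this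
    linarith
  -- the key per-step bound: 0 ≤ uₜ ≤ 1
  set u : ℕ → ℝ := fun t => x t ⬝ᵥ (V t)⁻¹ *ᵥ x t with hu
  have hu0 : ∀ t, 0 ≤ u t := by
    intro t
    have := ((hpos t).inv).posSemidef.dotProduct_mulVec_nonneg (x t)
    simpa using this
  have hu1 : ∀ t, u t ≤ 1 := by
    intro t
    set y : Fin d → ℝ := (V t)⁻¹ *ᵥ x t with hy
    have hVy : (V t) *ᵥ y = x t := by
      rw [hy, Matrix.mulVec_mulVec, Matrix.mul_nonsing_inv _ (isUnit_iff_ne_zero.2 (hpos t).det_pos.ne'),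
        Matrix.one_mulVec]
    have hs : u t = x t ⬝ᵥ y := rfl
    have hyy : lam * (y ⬝ᵥ y) ≤ u t := by
      have h := hq t y
      rw [hVy] at h
      rw [hs, dotProduct_comm (x t) y]
      exact h
    have hcs : (u t) ^ 2 ≤ (∑ i, (x t i) ^ 2) * ∑ i, (y i) ^ 2 := by
      rw [hs]
      exact Finset.sum_mul_sq_le_sq_mul_sq Finset.univ (x t) y
    have hyy' : (∑ i, (y i) ^ 2) = y ⬝ᵥ y := by
      simp [dotProduct, sq]
    have hxx : (∑ i, (x t i) ^ 2) ≤ 1 := hx t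
    have hxnn : (0:ℝ) ≤ ∑ i, (x t i) ^ 2 := Finset.sum_nonneg fun i _ => sq_nonneg _
    have hynn : (0:ℝ) ≤ ∑ i, (y i) ^ 2 := Finset.sum_nonneg fun i _ => sq_nonneg _
    nlinarith [hu0 t, hcs, hyy, hyy', hxx, hxnn, hynn, hlam0]
  -- determinant recursion
  have hdet : ∀ t, (V (t+1)).det = (V t).det * (1 + u t) := by
    intro t
    have hstep : V (t+1) = V t + vecMulVec (x t) (x t) := by
      rw [hV (t+1), hV t, Finset.sum_range_succ, add_assoc]
    have hfac : V (t+1) = V t * (1 + replicateCol Unit ((V t)⁻¹ *ᵥ x t) * replicateRow Unit (x t)) := by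
      rw [Matrix.mul_add, mul_one, hstep, Matrix.replicateCol_mulVec, ← Matrix.mul_assoc,
        ← Matrix.mul_assoc, Matrix.mul_nonsing_inv _ (isUnit_iff_ne_zero.2 (hpos t).det_pos.ne'), Matrix.one_mul,
        Matrix.vecMulVec_eq Unit]
    rw [hfac, Matrix.det_mul, Matrix.det_one_add_replicateCol_mul_replicateRow]
  -- telescoping
  have htel : ∀ n, ∑ t ∈ Finset.range n, Real.log (1 + u t)
      = Real.log ((V n).det) - Real.log ((V 0).det) := by
    intro n
    induction n with
    | zero => simp
    | succ n ih =>
      rw [Finset.sum_range_succ, ih, hdet n,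
        Real.log_mul (hpos n).det_pos.ne' (by nlinarith [hu0 n])]
      ring
  have hV0 : V 0 = lam • (1 : Matrix (Fin d) (Fin d) ℝ) := by
    rw [hV 0]; simp
  calc ∑ t ∈ Finset.range T, u t
      ≤ ∑ t ∈ Finset.range T, 2 * Real.log (1 + u t) :=
        Finset.sum_le_sum fun t _ => log_ineq (hu0 t) (hu1 t)
    _ = 2 * (Real.log ((V T).det) - Real.log ((V 0).det)) := by
        rw [← Finset.mul_sum, htel T]
    _ = 2 * Real.log ((V T).det / (lam • (1 : Matrix (Fin d) (Fin d) ℝ)).det) := by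
        rw [Real.log_div (hpos T).det_pos.ne' (by rw [← hV0]; exact (hpos 0).det_pos.ne'), hV0]
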